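/- Let p be a prime, let α, β ∈ ℚ_p with ‖α‖_p ≤ 1 and ‖β‖_p ≤ 1, let a, κ ∈ ℚ_p and j ∈ ℕ. Set M = a·I + κ·Δ = [[a, κα], [κ, a + κβ]], where Δ = [[0, α], [1, β]], and let L ⊆ ℚ_p × ℚ_p be the ℤ_p-submodule spanned by (1, 0) and (0, p^j). Then M maps L into L if and only if ‖a‖_p ≤ 1 and ‖κ‖_p ≤ p^{−j}. -/

import Mathlib

/-- The `ℤ_p`-submodule of `ℚ_p²` spanned by `(1, 0)` and `(0, p^j)`: the set of
`ℤ_p`-linear combinations `a•(1,0) + b•(0,p^j)` with `‖a‖ ≤ 1`, `‖b‖ ≤ 1`. -/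
noncomputable def Lspan' (p : ℕ) [Fact (Nat.Prime p)] (j : ℕ) : Set (Fin 2 → ℚ_[p]) :=
  {v | ∃ a b : ℚ_[p], ‖a‖ ≤ 1 ∧ ‖b‖ ≤ 1 ∧
    v = a • ![(1 : ℚ_[p]), 0] + b • ![(0 : ℚ_[p]), (p : ℚ_[p]) ^ j]}

lemma norm_p_pow' (p : ℕ) [Fact (Nat.Prime p)] (j : ℕ) :
    ‖((p : ℚ_[p]) ^ j)‖ = (p : ℝ) ^ (-(j:ℤ)) := by
  rw [norm_pow, Padic.norm_p, inv_pow, ← zpow_natCast, ← zpow_neg]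

lemma mem_Lspan' (p : ℕ) [Fact (Nat.Prime p)] (j : ℕ) (v : Fin 2 → ℚ_[p]) :
    v ∈ Lspan' p j ↔ ‖v 0‖ ≤ 1 ∧ ‖v 1‖ ≤ (p : ℝ) ^ (-(j:ℤ)) := by
  have hp0 : ((p : ℚ_[p]) ^ j) ≠ 0 := by
    exact pow_ne_zero _ (Nat.cast_ne_zero.mpr (Fact.out (p := p.Prime)).pos.ne')
  constructor
  · rintro ⟨x, y, hx, hy, rfl⟩
    constructor
    · simp only [Pi.add_apply, Pi.smul_apply, Matrix.cons_val_zero, smul_eq_mul, mul_one,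
        mul_zero, add_zero]
      simpa using hx
    · simp only [Pi.add_apply, Pi.smul_apply, Matrix.cons_val_one, Matrix.head_cons,
        Matrix.cons_val_zero, smul_eq_mul, mul_zero, zero_add]
      rw [norm_mul, norm_p_pow']
      calc ‖y‖ * (p:ℝ)^(-(j:ℤ)) ≤ 1 * (p:ℝ)^(-(j:ℤ)) := by
            apply mul_le_mul_of_nonneg_right hy (by positivity)
        _ = _ := one_mul _
  · rintro ⟨h0, h1⟩
    refine ⟨v 0, v 1 / (p:ℚ_[p])^j, h0, ?_, ?_⟩
    · rw [norm_div, norm_p_pow', div_le_one (zpow_pos (by exact_mod_cast (Fact.out (p := p.Prime)).pos) _)]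
      simpa using h1
    · funext i
      fin_cases i <;> simp [div_mul_cancel₀, hp0]

theorem stmt15 (p : ℕ) [Fact (Nat.Prime p)] (α β : ℚ_[p])
    (hα : ‖α‖ ≤ 1) (hβ : ‖β‖ ≤ 1) (a κ : ℚ_[p]) (j : ℕ) :
    (∀ v ∈ Lspan' p j, (!![a, κ * α; κ, a + κ * β]).mulVec v ∈ Lspan' p j) ↔
      ‖a‖ ≤ 1 ∧ ‖κ‖ ≤ (p : ℝ) ^ (-(j:ℤ)) := by
  have hple : (p:ℝ)^(-(j:ℤ)) ≤ 1 := by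
    apply zpow_le_one_of_nonpos₀
    · exact_mod_cast (Fact.out (p := p.Prime)).one_le
    · simp
  constructor
  · intro h
    have h1 : (![1, 0] : Fin 2 → ℚ_[p]) ∈ Lspan' p j := by
      rw [mem_Lspan']
      refine ⟨by simp, ?_⟩
      simp only [Matrix.cons_val_one, Matrix.head_cons, Matrix.cons_val_zero, norm_zero]
      positivity
    have := h _ h1
    rw [mem_Lspan'] at this
    simpa [Matrix.mulVec, dotProduct, Fin.sum_univ_two] using this
  · rintro ⟨ha, hκ⟩ v hv
    rw [mem_Lspan'] at hv ⊢
    obtain ⟨h0, h1⟩ := hv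
    have hκ1 : ‖κ‖ ≤ 1 := hκ.trans hple
    have hv1 : ‖v 1‖ ≤ 1 := h1.trans hple
    constructor
    · simp only [Matrix.mulVec, dotProduct, Fin.sum_univ_two]
      refine le_trans (Padic.nonarchimedean _ _) (max_le ?_ ?_) <;>
        simp only [Matrix.cons_val', Matrix.cons_val_zero, Matrix.cons_val_one, Matrix.head_cons,
          Matrix.empty_val', Matrix.cons_val_fin_one, Matrix.head_fin_const, norm_mul]
      · calc ‖a‖*‖v 0‖ ≤ 1*1 := mul_le_mul ha h0 (norm_nonneg _) zero_le_one
          _ = 1 := one_mul 1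
      · calc ‖κ*α‖*‖v 1‖ ≤ 1*1 := by
              apply mul_le_mul _ hv1 (norm_nonneg _) zero_le_one
              rw [norm_mul]
              calc ‖κ‖*‖α‖ ≤ 1*1 := mul_le_mul hκ1 hα (norm_nonneg _) zero_le_one
                _ = 1 := one_mul 1
          _ = 1 := one_mul 1
    · simp only [Matrix.mulVec, dotProduct, Fin.sum_univ_two]
      refine le_trans (Padic.nonarchimedean _ _) (max_le ?_ ?_) <;>
        simp only [Matrix.cons_val', Matrix.cons_val_zero, Matrix.cons_val_one, Matrix.head_cons,
          Matrix.empty_val', Matrix.cons_val_fin_one, Matrix.head_fin_const, norm_mul]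
      · calc ‖κ‖*‖v 0‖ ≤ (p:ℝ)^(-(j:ℤ))*1 :=
              mul_le_mul hκ h0 (norm_nonneg _) (by positivity)
          _ = _ := mul_one _
      · have haκβ : ‖a + κ*β‖ ≤ 1 := by
          refine le_trans (Padic.nonarchimedean _ _) (max_le ha ?_)
          rw [norm_mul]
          calc ‖κ‖*‖β‖ ≤ 1*1 := mul_le_mul hκ1 hβ (norm_nonneg _) zero_le_one
            _ = 1 := one_mul 1
        calc ‖a+κ*β‖*‖v 1‖ ≤ 1*((p:ℝ)^(-(j:ℤ))) :=
              mul_le_mul haκβ h1 (norm_nonneg _) zero_le_one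
          _ = _ := one_mul _
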